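/- For fixed 0 ≤ x ≤ 1/2 and C > 1, the function y ↦ F(x,y,C) = (h(x+y) − h(x+Cy))/(h(x) − h(x+y)) is nonincreasing in y for y > 0; in particular F(x,y,C) ≥ F(x, 1/(2C), C) for 0 < y ≤ 1/(2C). -/

import Mathlib

private lemma hh_strictAnti : StrictAntiOn (fun t : ℝ => t * Real.log t - t) (Set.Icc 0 1) := by
  apply strictAntiOn_of_deriv_neg (convex_Icc 0 1)
    ((Real.continuous_mul_log.sub continuous_id).continuousOn)
  intro t ht
  rw [interior_Icc] at ht
  have hd : HasDerivAt (fun t : ℝ => t * Real.log t - t) (Real.log t) t := by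
    exact ((Real.hasDerivAt_mul_log (ne_of_gt ht.1)).sub (hasDerivAt_id t)).congr_deriv (by ring)
  exact lt_of_eq_of_lt hd.deriv (Real.log_neg ht.1 ht.2)

private lemma star_ineq {x u : ℝ} (hx : 0 ≤ x) (hxu : x < u) (hu : u ≤ 1) :
    (-Real.log u - (u - x) / u) * ((x * Real.log x - x) - (u * Real.log u - u)) ≤
      (u - x) * Real.log u ^ 2 := by
  have hu0 : 0 < u := lt_of_le_of_lt hx hxu
  have ha : Real.log u ≤ 0 := Real.log_nonpos hu0.le hu
  rw [show -Real.log u - (u - x) / u = (-(u * Real.log u) - (u - x)) / u by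
        field_simp,
      div_mul_eq_mul_div, div_le_iff₀ hu0]
  rcases eq_or_lt_of_le hx with h0 | hx0
  · subst h0
    simp only [Real.log_zero]
    nlinarith [sq_nonneg u, sq_nonneg (Real.log u)]
  · have f1 : Real.log x - Real.log u ≤ x / u - 1 := by
      have := Real.log_le_sub_one_of_pos (div_pos hx0 hu0)
      rwa [Real.log_div (ne_of_gt hx0) (ne_of_gt hu0)] at this
    have f2 : Real.log u - Real.log x ≤ u / x - 1 := by
      have := Real.log_le_sub_one_of_pos (div_pos hu0 hx0)
      rwa [Real.log_div (ne_of_gt hu0) (ne_of_gt hx0)] at this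
    have g1 : u - x ≤ u * (Real.log u - Real.log x) := by
      have h := mul_le_mul_of_nonneg_left f1 hu0.le
      have e : u * (x / u - 1) = x - u := by field_simp
      nlinarith
    have g2 : x * (Real.log u - Real.log x) ≤ u - x := by
      have h := mul_le_mul_of_nonneg_left f2 hx0.le
      have e : x * (u / x - 1) = u - x := by field_simp
      nlinarith
    nlinarith [mul_nonneg (sub_nonneg.2 hxu.le) (by linarith : (0:ℝ) ≤ (u - x) - x * (Real.log u - Real.log x)),
      mul_nonneg (mul_nonneg (neg_nonneg.2 ha) hx0.le)
        (by linarith : (0:ℝ) ≤ u * (Real.log u - Real.log x) - (u - x))]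

noncomputable def gg (x t : ℝ) : ℝ :=
  (x * Real.log x - x) - ((x + t) * Real.log (x + t) - (x + t))

private lemma gg_pos {x t : ℝ} (hx0 : 0 ≤ x) (ht : 0 < t) (hxt : x + t ≤ 1) :
    0 < gg x t := by
  have := hh_strictAnti (Set.mem_Icc.2 ⟨hx0, by linarith⟩)
    (Set.mem_Icc.2 ⟨by linarith, hxt⟩) (by linarith : x < x + t)
  simpa [gg] using sub_pos.2 this

private lemma gg_hasDeriv {x t : ℝ} (h : 0 < x + t) :
    HasDerivAt (gg x) (-Real.log (x + t)) t := by
  have h1 : HasDerivAt (fun t : ℝ => x + t) 1 t := (hasDerivAt_id t).const_add x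
  have h2 : HasDerivAt (fun t : ℝ => (x + t) * Real.log (x + t))
      ((Real.log (x + t) + 1) * 1) t :=
    (Real.hasDerivAt_mul_log (ne_of_gt h)).comp t h1
  have h3 := ((h2.sub h1).const_sub (x * Real.log x - x))
  exact h3.congr_deriv (by ring)

private lemma gg_cont (x : ℝ) : Continuous (gg x) := by
  unfold gg
  exact continuous_const.sub
    ((Real.continuous_mul_log.comp (continuous_const.add continuous_id)).sub
      (continuous_const.add continuous_id))

private lemma psi_anti {x : ℝ} (hx0 : 0 ≤ x) (hx : x ≤ 1 / 2) :
    AntitoneOn (fun t => t * (-Real.log (x + t)) / gg x t) (Set.Ioc 0 (1 / 2)) := by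
  have hmem : ∀ t ∈ Set.Ioc (0:ℝ) (1/2), 0 < x + t ∧ x + t ≤ 1 ∧ 0 < gg x t := by
    intro t ht
    exact ⟨by linarith [ht.1], by linarith [ht.2], gg_pos hx0 ht.1 (by linarith [ht.2])⟩
  have hderiv : ∀ t ∈ Set.Ioo (0:ℝ) (1/2),
      HasDerivAt (fun t => t * (-Real.log (x + t)) / gg x t)
        (((1 * -Real.log (x + t) + t * -((x + t)⁻¹ * 1)) * gg x t -
          t * -Real.log (x + t) * -Real.log (x + t)) / gg x t ^ 2) t := by
    intro t ht
    obtain ⟨hxt, hxt1, hg⟩ := hmem t ⟨ht.1, ht.2.le⟩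
    have h1 : HasDerivAt (fun t : ℝ => x + t) 1 t := (hasDerivAt_id t).const_add x
    have hlog : HasDerivAt (fun t : ℝ => Real.log (x + t)) ((x + t)⁻¹ * 1) t :=
      (Real.hasDerivAt_log (ne_of_gt hxt)).comp t h1
    exact ((hasDerivAt_id t).mul hlog.neg).div (gg_hasDeriv hxt) (ne_of_gt hg)
  apply antitoneOn_of_deriv_nonpos (convex_Ioc _ _)
  · intro t ht
    obtain ⟨hxt, hxt1, hg⟩ := hmem t ht
    apply ContinuousAt.continuousWithinAt
    exact (((continuousAt_id).mul
      ((Real.continuousAt_log (ne_of_gt hxt)).comp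
        ((continuous_const.add continuous_id).continuousAt)).neg).div
      ((gg_cont x).continuousAt) (ne_of_gt hg))
  · rw [interior_Ioc]
    intro t ht
    exact (hderiv t ht).differentiableAt.differentiableWithinAt
  · rw [interior_Ioc]
    intro t ht
    rw [(hderiv t ht).deriv]
    obtain ⟨hxt, hxt1, hg⟩ := hmem t ⟨ht.1, ht.2.le⟩
    apply div_nonpos_of_nonpos_of_nonneg _ (sq_nonneg _)
    have hstar := star_ineq hx0 (by linarith [ht.1] : x < x + t) hxt1
    have e : (x + t - x) / (x + t) = t * (x + t)⁻¹ := by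
      rw [show x + t - x = t by ring, div_eq_mul_inv]
    rw [e] at hstar
    have e2 : x + t - x = t := by ring
    rw [e2] at hstar
    simp only [gg]
    nlinarith [hstar]

private lemma key_ineq {x C : ℝ} (hx0 : 0 ≤ x) (hx : x ≤ 1 / 2) (hC : 1 < C)
    {y₁ y₂ : ℝ} (h1 : 0 < y₁) (h12 : y₁ ≤ y₂) (h2 : y₂ ≤ 1 / (2 * C)) :
    gg x (C * y₂) * gg x y₁ ≤ gg x (C * y₁) * gg x y₂ := by
  have hC0 : 0 < C := by linarith
  have hhalf : 1 / (2 * C) ≤ 1 / 2 := by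
    apply div_le_div_of_nonneg_left (by norm_num) (by norm_num) (by linarith)
  -- membership facts
  have hmem : ∀ y ∈ Set.Ioc (0:ℝ) (1 / (2 * C)),
      y ∈ Set.Ioc (0:ℝ) (1/2) ∧ C * y ∈ Set.Ioc (0:ℝ) (1/2) := by
    intro y hy
    have hCy : C * y ≤ 1 / 2 := by
      have h := mul_le_mul_of_nonneg_left hy.2 hC0.le
      have e : C * (1 / (2 * C)) = 1 / 2 := by field_simp
      linarith
    exact ⟨⟨hy.1, hy.2.trans hhalf⟩, ⟨mul_pos hC0 hy.1, hCy⟩⟩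
  have hgpos : ∀ t ∈ Set.Ioc (0:ℝ) (1/2), 0 < gg x t ∧ 0 < x + t := by
    intro t ht
    exact ⟨gg_pos hx0 ht.1 (by linarith [ht.2]), by linarith [ht.1]⟩
  have hanti : AntitoneOn (fun y => Real.log (gg x (C * y)) - Real.log (gg x y))
      (Set.Ioc 0 (1 / (2 * C))) := by
    have hderiv : ∀ y ∈ Set.Ioo (0:ℝ) (1 / (2 * C)),
        HasDerivAt (fun y => Real.log (gg x (C * y)) - Real.log (gg x y))
          (-Real.log (x + C * y) * (C * 1) / gg x (C * y) -
            -Real.log (x + y) / gg x y) y := by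
      intro y hy
      obtain ⟨hy1, hy2⟩ := hmem y ⟨hy.1, hy.2.le⟩
      obtain ⟨hga, hxa⟩ := hgpos y hy1
      obtain ⟨hgb, hxb⟩ := hgpos (C * y) hy2
      have hc : HasDerivAt (fun y : ℝ => C * y) (C * 1) y :=
        (hasDerivAt_id y).const_mul C
      have hin : HasDerivAt (fun y => gg x (C * y)) (-Real.log (x + C * y) * (C * 1)) y :=
        (gg_hasDeriv hxb).comp y hc
      exact (hin.log (ne_of_gt hgb)).sub ((gg_hasDeriv hxa).log (ne_of_gt hga))
    apply antitoneOn_of_deriv_nonpos (convex_Ioc _ _)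
    · intro y hy
      obtain ⟨hy1, hy2⟩ := hmem y hy
      obtain ⟨hga, _⟩ := hgpos y hy1
      obtain ⟨hgb, _⟩ := hgpos (C * y) hy2
      apply ContinuousAt.continuousWithinAt
      apply ContinuousAt.sub
      · exact ContinuousAt.log
          (((gg_cont x).comp (continuous_const.mul continuous_id)).continuousAt)
          (ne_of_gt hgb)
      · exact ContinuousAt.log ((gg_cont x).continuousAt) (ne_of_gt hga)
    · rw [interior_Ioc]
      intro y hy
      exact (hderiv y hy).differentiableAt.differentiableWithinAt
    · rw [interior_Ioc]
      intro y hy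
      rw [(hderiv y hy).deriv]
      obtain ⟨hy1, hy2⟩ := hmem y ⟨hy.1, hy.2.le⟩
      obtain ⟨hga, hxa⟩ := hgpos y hy1
      obtain ⟨hgb, hxb⟩ := hgpos (C * y) hy2
      have hpsi := psi_anti hx0 hx hy1 hy2
        (by nlinarith [hy.1] : y ≤ C * y)
      rw [sub_nonpos]
      have e1 : C * y * -Real.log (x + C * y) / gg x (C * y) =
          y * (-Real.log (x + C * y) * (C * 1) / gg x (C * y)) := by ring
      have e2 : y * -Real.log (x + y) / gg x y = y * (-Real.log (x + y) / gg x y) := by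
        ring
      simp only at hpsi
      rw [e1, e2] at hpsi
      exact le_of_mul_le_mul_left hpsi hy.1
  have hmono := hanti (Set.mem_Ioc.2 ⟨h1, h12.trans h2⟩) (Set.mem_Ioc.2 ⟨h1.trans_le h12, h2⟩) h12
  obtain ⟨hy1m, hy1Cm⟩ := hmem y₁ ⟨h1, h12.trans h2⟩
  obtain ⟨hy2m, hy2Cm⟩ := hmem y₂ ⟨h1.trans_le h12, h2⟩
  obtain ⟨hg1, _⟩ := hgpos y₁ hy1m
  obtain ⟨hg2, _⟩ := hgpos y₂ hy2m
  obtain ⟨hgc1, _⟩ := hgpos (C * y₁) hy1Cm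
  obtain ⟨hgc2, _⟩ := hgpos (C * y₂) hy2Cm
  simp only at hmono
  rw [sub_le_sub_iff, ← Real.log_mul (ne_of_gt hgc2) (ne_of_gt hg1),
    ← Real.log_mul (ne_of_gt hgc1) (ne_of_gt hg2)] at hmono
  exact (Real.log_le_log_iff (by positivity) (by positivity)).1 hmono


/-- For fixed `0 ≤ x ≤ 1/2` and `C > 1`, the quotient
`F(x,y,C) = (h(x+y) - h(x+Cy)) / (h(x) - h(x+y))` is nonincreasing in `y` on
`(0, 1/(2C)]`; in particular `F(x,y,C) ≥ F(x, 1/(2C), C)` there. -/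
theorem quotient_antitone_in_y (x C : ℝ) (hx0 : 0 ≤ x) (hx : x ≤ 1 / 2) (hC : 1 < C) :
    (∀ y₁ y₂ : ℝ, 0 < y₁ → y₁ ≤ y₂ → y₂ ≤ 1 / (2 * C) →
      (((x + y₂) * Real.log (x + y₂) - (x + y₂)) -
          ((x + C * y₂) * Real.log (x + C * y₂) - (x + C * y₂))) /
        ((x * Real.log x - x) - ((x + y₂) * Real.log (x + y₂) - (x + y₂))) ≤
      (((x + y₁) * Real.log (x + y₁) - (x + y₁)) -
          ((x + C * y₁) * Real.log (x + C * y₁) - (x + C * y₁))) /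
        ((x * Real.log x - x) - ((x + y₁) * Real.log (x + y₁) - (x + y₁)))) ∧
    (∀ y : ℝ, 0 < y → y ≤ 1 / (2 * C) →
      (((x + 1 / (2 * C)) * Real.log (x + 1 / (2 * C)) - (x + 1 / (2 * C))) -
          ((x + 1 / 2) * Real.log (x + 1 / 2) - (x + 1 / 2))) /
        ((x * Real.log x - x) -
          ((x + 1 / (2 * C)) * Real.log (x + 1 / (2 * C)) - (x + 1 / (2 * C)))) ≤
      (((x + y) * Real.log (x + y) - (x + y)) -
          ((x + C * y) * Real.log (x + C * y) - (x + C * y))) /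
        ((x * Real.log x - x) - ((x + y) * Real.log (x + y) - (x + y)))) := by
  have hC0 : 0 < C := by linarith
  have hhalf : 1 / (2 * C) ≤ 1 / 2 := by
    apply div_le_div_of_nonneg_left (by norm_num) (by norm_num) (by linarith)
  have main : ∀ y₁ y₂ : ℝ, 0 < y₁ → y₁ ≤ y₂ → y₂ ≤ 1 / (2 * C) →
      (((x + y₂) * Real.log (x + y₂) - (x + y₂)) -
          ((x + C * y₂) * Real.log (x + C * y₂) - (x + C * y₂))) /
        ((x * Real.log x - x) - ((x + y₂) * Real.log (x + y₂) - (x + y₂))) ≤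
      (((x + y₁) * Real.log (x + y₁) - (x + y₁)) -
          ((x + C * y₁) * Real.log (x + C * y₁) - (x + C * y₁))) /
        ((x * Real.log x - x) - ((x + y₁) * Real.log (x + y₁) - (x + y₁))) := by
    intro y₁ y₂ h1 h12 h2
    have hg1 : 0 < gg x y₁ := gg_pos hx0 h1 (by linarith [h12.trans (h2.trans hhalf)])
    have hg2 : 0 < gg x y₂ := gg_pos hx0 (h1.trans_le h12) (by linarith [h2.trans hhalf])
    have key := key_ineq hx0 hx hC h1 h12 h2
    have e1 : ((x + y₁) * Real.log (x + y₁) - (x + y₁)) -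
        ((x + C * y₁) * Real.log (x + C * y₁) - (x + C * y₁)) =
        gg x (C * y₁) - gg x y₁ := by
      simp only [gg]; ring
    have e2 : ((x + y₂) * Real.log (x + y₂) - (x + y₂)) -
        ((x + C * y₂) * Real.log (x + C * y₂) - (x + C * y₂)) =
        gg x (C * y₂) - gg x y₂ := by
      simp only [gg]; ring
    have d1 : (x * Real.log x - x) - ((x + y₁) * Real.log (x + y₁) - (x + y₁)) =
        gg x y₁ := rfl
    have d2 : (x * Real.log x - x) - ((x + y₂) * Real.log (x + y₂) - (x + y₂)) =
        gg x y₂ := rfl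
    rw [e1, e2, d1, d2, div_le_div_iff₀ hg2 hg1]
    nlinarith [key]
  refine ⟨main, ?_⟩
  intro y hy hy2
  have h := main y (1 / (2 * C)) hy hy2 le_rfl
  have e : C * (1 / (2 * C)) = 1 / 2 := by field_simp
  rwa [e] at h
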